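/- For any real numbers c and b with 0 < c < 1 and b ≥ 0, one has [ (2 − c)b + 3 + c + √( (3 + c + bc)² + 4(1 − c)bc ) ] / 2 < b + 4. (With c = λ₁/λ₂ and b = n²H₀²/λ₁, this shows the bound of Theorem 2.1 is strictly smaller than the bound n + √((n²H₀²/λ₁ + 4)²) = n + n²H₀²/λ₁ + 4 of Chen and Cheng.) -/
import Mathlib

/-- Remark 2.1 of Cheng–Qi.
For real numbers `c`, `b` with `0 < c < 1` and `b ≥ 0` (in the paper, `c = λ₁/λ₂` and
`b = n²H₀²/λ₁`, so that `b·c = n²H₀²/λ₂`), one has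
`[(2−c)b + 3 + c + √((3+c+bc)² + 4(1−c)bc)]/2 < b + 4`. -/
theorem algebraic_bound_strictly_smaller (c b : ℝ) (hc0 : 0 < c) (hc1 : c < 1) (hb : 0 ≤ b) :
    ((2 - c) * b + 3 + c + Real.sqrt ((3 + c + b * c) ^ 2 + 4 * (1 - c) * (b * c))) / 2
      < b + 4 := by
  have h : Real.sqrt ((3 + c + b * c) ^ 2 + 4 * (1 - c) * (b * c)) < b * c + 5 - c := by
    rw [show b * c + 5 - c = Real.sqrt ((b * c + 5 - c) ^ 2) from
      (Real.sqrt_sq (by nlinarith)).symm]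
    apply Real.sqrt_lt_sqrt
    · have : 0 ≤ b * c := mul_nonneg hb hc0.le
      nlinarith
    · nlinarith
  linarith
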